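/- arXiv:2005.07183 — 2 statements merged into one kernel-verified Lean document; each statement's English description precedes it below -/
import Mathlib

section
/- Pivotal morphisms are closed under composition: if f: (P₁,Q₁) → (P₂,Q₂) and g: (P₂,Q₂) → (P₃,Q₃) are pivotal morphisms between pivotal pairs, then g∘f: (P₁,Q₁) → (P₃,Q₃) is pivotal. Hence the pivotal cover C^piv, with pivotal pairs as objects and pivotal morphisms as morphisms, is a well-defined category. -/
open CategoryTheory MonoidalCategory

universe v u

variable {C : Type u} [Category.{v} C] [MonoidalCategory C]

/-- A pivotal pair `(P, Q)` in a monoidal category. -/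
structure PivotalPair (P Q : C) where
  coev : 𝟙_ C ⟶ P ⊗ Q
  ev : Q ⊗ P ⟶ 𝟙_ C
  coev' : 𝟙_ C ⟶ Q ⊗ P
  ev' : P ⊗ Q ⟶ 𝟙_ C
  coev_ev : Q ◁ coev ≫ (α_ Q P Q).inv ≫ ev ▷ Q = (ρ_ Q).hom ≫ (λ_ Q).inv
  ev_coev : coev ▷ P ≫ (α_ P Q P).hom ≫ P ◁ ev = (λ_ P).hom ≫ (ρ_ P).inv
  coev_ev' : P ◁ coev' ≫ (α_ P Q P).inv ≫ ev' ▷ P = (ρ_ P).hom ≫ (λ_ P).inv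
  ev_coev' : coev' ▷ Q ≫ (α_ Q P Q).hom ≫ Q ◁ ev' = (λ_ Q).hom ≫ (ρ_ Q).inv

/-- The "left dual" `(ev₂ ⊗ Q₁)(Q₂ ⊗ f ⊗ Q₁)(Q₂ ⊗ coev₁) : Q₂ ⟶ Q₁` of `f : P₁ ⟶ P₂`. -/
def leftDualMap {P₁ Q₁ P₂ Q₂ : C} (h₁ : PivotalPair P₁ Q₁) (h₂ : PivotalPair P₂ Q₂)
    (f : P₁ ⟶ P₂) : Q₂ ⟶ Q₁ :=
  (ρ_ Q₂).inv ≫ Q₂ ◁ h₁.coev ≫ Q₂ ◁ (f ▷ Q₁) ≫ (α_ Q₂ P₂ Q₁).inv ≫ h₂.ev ▷ Q₁ ≫ (λ_ Q₁).hom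

/-- The "right dual" `(Q₁ ⊗ ev'₂)(Q₁ ⊗ f ⊗ Q₂)(coev'₁ ⊗ Q₂) : Q₂ ⟶ Q₁` of `f : P₁ ⟶ P₂`. -/
def rightDualMap {P₁ Q₁ P₂ Q₂ : C} (h₁ : PivotalPair P₁ Q₁) (h₂ : PivotalPair P₂ Q₂)
    (f : P₁ ⟶ P₂) : Q₂ ⟶ Q₁ :=
  (λ_ Q₂).inv ≫ h₁.coev' ▷ Q₂ ≫ (Q₁ ◁ f) ▷ Q₂ ≫ (α_ Q₁ P₂ Q₂).hom ≫ Q₁ ◁ h₂.ev' ≫ (ρ_ Q₁).hom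

/-- `f : P₁ ⟶ P₂` is a pivotal morphism `(P₁,Q₁) → (P₂,Q₂)` if its left and right duals
agree as morphisms `Q₂ ⟶ Q₁`. -/
def IsPivotalHom {P₁ Q₁ P₂ Q₂ : C} (h₁ : PivotalPair P₁ Q₁) (h₂ : PivotalPair P₂ Q₂)
    (f : P₁ ⟶ P₂) : Prop :=
  leftDualMap h₁ h₂ f = rightDualMap h₁ h₂ f


section Aux
variable {P₁ Q₁ P₂ Q₂ P₃ Q₃ : C}

/-- A pivotal pair gives an exact pairing `(P, Q)`. -/
def PivotalPair.exact₁ {P Q : C} (h : PivotalPair P Q) : ExactPairing P Q :=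
  ⟨h.coev, h.ev, h.coev_ev, h.ev_coev⟩

/-- A pivotal pair gives an exact pairing `(Q, P)`. -/
def PivotalPair.exact₂ {P Q : C} (h : PivotalPair P Q) : ExactPairing Q P :=
  ⟨h.coev', h.ev', h.coev_ev', h.ev_coev'⟩

lemma leftDualMap_eq_rightAdjointMate (h₁ : PivotalPair P₁ Q₁) (h₂ : PivotalPair P₂ Q₂)
    (f : P₁ ⟶ P₂) :
    letI := h₁.exact₁; letI := h₂.exact₁
    letI : HasRightDual P₁ := ⟨Q₁⟩; letI : HasRightDual P₂ := ⟨Q₂⟩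
    leftDualMap h₁ h₂ f = fᘁ := rfl

lemma rightDualMap_eq_leftAdjointMate (h₁ : PivotalPair P₁ Q₁) (h₂ : PivotalPair P₂ Q₂)
    (f : P₁ ⟶ P₂) :
    letI := h₁.exact₂; letI := h₂.exact₂
    letI : HasLeftDual P₁ := ⟨Q₁⟩; letI : HasLeftDual P₂ := ⟨Q₂⟩
    rightDualMap h₁ h₂ f = ᘁf := rfl

lemma leftDualMap_id (h : PivotalPair P₁ Q₁) : leftDualMap h h (𝟙 P₁) = 𝟙 Q₁ := by
  letI := h.exact₁
  letI : HasRightDual P₁ := ⟨Q₁⟩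
  rw [leftDualMap_eq_rightAdjointMate, rightAdjointMate_id]; rfl

lemma rightDualMap_id (h : PivotalPair P₁ Q₁) : rightDualMap h h (𝟙 P₁) = 𝟙 Q₁ := by
  letI := h.exact₂
  letI : HasLeftDual P₁ := ⟨Q₁⟩
  rw [rightDualMap_eq_leftAdjointMate, leftAdjointMate_id]; rfl

lemma leftDualMap_comp (h₁ : PivotalPair P₁ Q₁) (h₂ : PivotalPair P₂ Q₂)
    (h₃ : PivotalPair P₃ Q₃) (f : P₁ ⟶ P₂) (g : P₂ ⟶ P₃) :
    leftDualMap h₁ h₃ (f ≫ g) = leftDualMap h₂ h₃ g ≫ leftDualMap h₁ h₂ f := by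
  letI := h₁.exact₁; letI := h₂.exact₁; letI := h₃.exact₁
  letI : HasRightDual P₁ := ⟨Q₁⟩; letI : HasRightDual P₂ := ⟨Q₂⟩
  letI : HasRightDual P₃ := ⟨Q₃⟩
  rw [leftDualMap_eq_rightAdjointMate, leftDualMap_eq_rightAdjointMate,
    leftDualMap_eq_rightAdjointMate, comp_rightAdjointMate]

lemma rightDualMap_comp (h₁ : PivotalPair P₁ Q₁) (h₂ : PivotalPair P₂ Q₂)
    (h₃ : PivotalPair P₃ Q₃) (f : P₁ ⟶ P₂) (g : P₂ ⟶ P₃) :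
    rightDualMap h₁ h₃ (f ≫ g) = rightDualMap h₂ h₃ g ≫ rightDualMap h₁ h₂ f := by
  letI := h₁.exact₂; letI := h₂.exact₂; letI := h₃.exact₂
  letI : HasLeftDual P₁ := ⟨Q₁⟩; letI : HasLeftDual P₂ := ⟨Q₂⟩
  letI : HasLeftDual P₃ := ⟨Q₃⟩
  rw [rightDualMap_eq_leftAdjointMate, rightDualMap_eq_leftAdjointMate,
    rightDualMap_eq_leftAdjointMate, comp_leftAdjointMate]

end Aux

/-- Pivotal morphisms contain identities and are closed under composition; hence the pivotal
cover `C^piv`, with pivotal pairs as objects and pivotal morphisms as morphisms, is a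
well-defined category. -/
theorem isPivotalHom_id_and_comp :
    (∀ (P Q : C) (h : PivotalPair P Q), IsPivotalHom h h (𝟙 P)) ∧
    (∀ (P₁ Q₁ P₂ Q₂ P₃ Q₃ : C) (h₁ : PivotalPair P₁ Q₁) (h₂ : PivotalPair P₂ Q₂)
      (h₃ : PivotalPair P₃ Q₃) (f : P₁ ⟶ P₂) (g : P₂ ⟶ P₃),
      IsPivotalHom h₁ h₂ f → IsPivotalHom h₂ h₃ g → IsPivotalHom h₁ h₃ (f ≫ g)) := by
  constructor
  · intro P Q h
    unfold IsPivotalHom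
    rw [leftDualMap_id, rightDualMap_id]
  · intro P₁ Q₁ P₂ Q₂ P₃ Q₃ h₁ h₂ h₃ f g hf hg
    unfold IsPivotalHom at *
    rw [leftDualMap_comp, rightDualMap_comp, hf, hg]
end

section
/- Let Q ∈ GL(n,k) be an invertible matrix with inverse entries p_{ij} and entries q_{ij}. Then the quotient of the free algebra k⟨fᵢⱼ, eᵢⱼ : 1 ≤ i,j ≤ n⟩ by the relations Σⱼ fⱼₖeⱼᵢ = Σⱼ fᵢⱼeₖⱼ = pᵢₖ and Σ_{j,l} eⱼᵢf_{lk}q_{jl} = Σ_{j,l} eᵢⱼf_{kl}q_{lj} = δᵢₖ is a Hopf algebra with coproduct Δ(eᵢₖ) = Σⱼ eᵢⱼ⊗eⱼₖ, Δ(fᵢₖ) = Σ_{j,l} fᵢⱼ⊗f_{lk}q_{jl}, counit ε(eᵢₖ) = δᵢₖ, ε(fᵢₖ) = pᵢₖ, and antipode S(eᵢₖ) = Σ_l f_{kl}q_{li}, S(fᵢₖ) = Σ_l eₖₗp_{il}. -/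
open scoped TensorProduct

noncomputable section

variable (k : Type) [Field k] (n : ℕ)

/-- Generators `fᵢⱼ` (inl) and `eᵢⱼ` (inr), `1 ≤ i,j ≤ n`. -/
abbrev PivGen (n : ℕ) := (Fin n × Fin n) ⊕ (Fin n × Fin n)

/-- The generator `fᵢⱼ` in the free algebra. -/
def fg (i j : Fin n) : FreeAlgebra k (PivGen n) := FreeAlgebra.ι k (Sum.inl (i, j))

/-- The generator `eᵢⱼ` in the free algebra. -/
def eg (i j : Fin n) : FreeAlgebra k (PivGen n) := FreeAlgebra.ι k (Sum.inr (i, j))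

/-- The relations `Σⱼ fⱼₖeⱼᵢ = Σⱼ fᵢⱼeₖⱼ = pᵢₖ` and
`Σ_{j,l} eⱼᵢf_{lk}q_{jl} = Σ_{j,l} eᵢⱼf_{kl}q_{lj} = δᵢₖ` associated to an invertible matrix
`q` with inverse `p`. -/
inductive MatrixRel (q p : Matrix (Fin n) (Fin n) k) :
    FreeAlgebra k (PivGen n) → FreeAlgebra k (PivGen n) → Prop
  | left_pair (i c : Fin n) :
      MatrixRel q p (∑ j, fg k n j c * eg k n j i) (algebraMap k _ (p i c))
  | right_pair (i c : Fin n) :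
      MatrixRel q p (∑ j, fg k n i j * eg k n c j) (algebraMap k _ (p i c))
  | left_copair (i c : Fin n) :
      MatrixRel q p (∑ j, ∑ l, q j l • (eg k n j i * fg k n l c))
        (if i = c then 1 else 0)
  | right_copair (i c : Fin n) :
      MatrixRel q p (∑ j, ∑ l, q l j • (eg k n i j * fg k n c l))
        (if i = c then 1 else 0)

/-- The algebra associated to an invertible `n × n` matrix `q` (Example 5.10): the quotient
of the free algebra `k⟨fᵢⱼ, eᵢⱼ⟩` by the relations above. -/
def MatrixHopf (q p : Matrix (Fin n) (Fin n) k) : Type :=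
  RingQuot (MatrixRel k n q p)

instance (q p : Matrix (Fin n) (Fin n) k) : Ring (MatrixHopf k n q p) :=
  inferInstanceAs (Ring (RingQuot (MatrixRel k n q p)))

instance (q p : Matrix (Fin n) (Fin n) k) : Algebra k (MatrixHopf k n q p) :=
  inferInstanceAs (Algebra k (RingQuot (MatrixRel k n q p)))

/-- The images of the generators `fᵢⱼ` in the quotient. -/
def F' (q p : Matrix (Fin n) (Fin n) k) (i j : Fin n) : MatrixHopf k n q p :=
  RingQuot.mkAlgHom k (MatrixRel k n q p) (fg k n i j)

/-- The images of the generators `eᵢⱼ` in the quotient. -/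
def E' (q p : Matrix (Fin n) (Fin n) k) (i j : Fin n) : MatrixHopf k n q p :=
  RingQuot.mkAlgHom k (MatrixRel k n q p) (eg k n i j)

namespace MHAux

variable (q p : Matrix (Fin n) (Fin n) k)

local notation "FF" => F' k n q p
local notation "EE" => E' k n q p
local notation "𝔸" => MatrixHopf k n q p

lemma sum_qp (hqp : q * p = 1) (i c : Fin n) :
    ∑ l, q i l * p l c = if i = c then (1:k) else 0 := by
  have h : (q * p) i c = (1 : Matrix (Fin n) (Fin n) k) i c := by rw [hqp]
  simpa [Matrix.mul_apply, Matrix.one_apply] using h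

lemma sum_pq (hpq : p * q = 1) (i c : Fin n) :
    ∑ l, p i l * q l c = if i = c then (1:k) else 0 := by
  have h : (p * q) i c = (1 : Matrix (Fin n) (Fin n) k) i c := by rw [hpq]
  simpa [Matrix.mul_apply, Matrix.one_apply] using h

lemma relL (i c : Fin n) : ∑ j, FF j c * EE j i = algebraMap k 𝔸 (p i c) := by
  have h := RingQuot.mkAlgHom_rel k (MatrixRel.left_pair (q := q) (p := p) i c)
  simp [F', E', map_sum, map_mul, AlgHom.commutes] at h ⊢
  exact h

lemma relR (i c : Fin n) : ∑ j, FF i j * EE c j = algebraMap k 𝔸 (p i c) := by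
  have h := RingQuot.mkAlgHom_rel k (MatrixRel.right_pair (q := q) (p := p) i c)
  simp [F', E', map_sum, map_mul, AlgHom.commutes] at h ⊢
  exact h

lemma relCL (i c : Fin n) :
    ∑ j, ∑ l, q j l • (EE j i * FF l c) = if i = c then (1:𝔸) else 0 := by
  have h := RingQuot.mkAlgHom_rel k (MatrixRel.left_copair (q := q) (p := p) i c)
  simp [F', E', map_sum, map_mul, map_smul, apply_ite] at h ⊢
  exact h

lemma relCR (i c : Fin n) :
    ∑ j, ∑ l, q l j • (EE i j * FF c l) = if i = c then (1:𝔸) else 0 := by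
  have h := RingQuot.mkAlgHom_rel k (MatrixRel.right_copair (q := q) (p := p) i c)
  simp [F', E', map_sum, map_mul, map_smul, apply_ite] at h ⊢
  exact h

lemma algHom_ext {B : Type*} [Semiring B] [Algebra k B] {f g : 𝔸 →ₐ[k] B}
    (hF : ∀ i j, f (FF i j) = g (FF i j))
    (hE : ∀ i j, f (EE i j) = g (EE i j)) : f = g := by
  refine RingQuot.ringQuot_ext' k _ _ (FreeAlgebra.hom_ext (funext fun x => ?_))
  obtain (⟨i, j⟩ | ⟨i, j⟩) := x
  · exact hF i j
  · exact hE i j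

lemma sum_rot3 {M : Type*} [AddCommMonoid M] (f : Fin n → Fin n → Fin n → M) :
    ∑ j, ∑ a, ∑ b, f j a b = ∑ a, ∑ b, ∑ j, f j a b := by
  rw [Finset.sum_comm]
  exact Finset.sum_congr rfl fun a _ => Finset.sum_comm

lemma sum_rot4 {M : Type*} [AddCommMonoid M] (f : Fin n → Fin n → Fin n → Fin n → M) :
    ∑ j, ∑ a, ∑ b, ∑ m, f j a b m = ∑ a, ∑ b, ∑ m, ∑ j, f j a b m := by
  rw [Finset.sum_comm]
  exact Finset.sum_congr rfl fun a _ => sum_rot3 n _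

/-- values of the comultiplication on generators -/
def comulGen : PivGen n → 𝔸 ⊗[k] 𝔸
  | .inl (i, c) => ∑ j, ∑ l, q j l • (FF i j ⊗ₜ[k] FF l c)
  | .inr (i, c) => ∑ j, EE i j ⊗ₜ[k] EE j c

lemma comulFree_fg (i c : Fin n) :
    FreeAlgebra.lift k (comulGen k n q p) (fg k n i c)
      = ∑ j, ∑ l, q j l • (FF i j ⊗ₜ[k] FF l c) := by
  simp [fg, comulGen]

lemma comulFree_eg (i c : Fin n) :
    FreeAlgebra.lift k (comulGen k n q p) (eg k n i c)
      = ∑ j, EE i j ⊗ₜ[k] EE j c := by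
  simp [eg, comulGen]

lemma sum_rot5 {M : Type*} [AddCommMonoid M] (f : Fin n → Fin n → Fin n → Fin n → Fin n → M) :
    ∑ j, ∑ a, ∑ b, ∑ m, ∑ r, f j a b m r = ∑ a, ∑ b, ∑ m, ∑ r, ∑ j, f j a b m r := by
  rw [Finset.sum_comm]
  exact Finset.sum_congr rfl fun a _ => sum_rot4 n _

lemma comul_rel (hqp : q * p = 1) (hpq : p * q = 1) :
    ∀ ⦃x y⦄, MatrixRel k n q p x y →
      FreeAlgebra.lift k (comulGen k n q p) x = FreeAlgebra.lift k (comulGen k n q p) y := by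
  intro x y h
  induction h with
  | left_pair i c =>
      rw [map_sum, AlgHom.commutes]
      calc ∑ j, (FreeAlgebra.lift k (comulGen k n q p)) (fg k n j c * eg k n j i)
          = ∑ j, ∑ m, ∑ a, ∑ b,
              q a b • ((FF j a * EE j m) ⊗ₜ[k] (FF b c * EE m i)) := by
            simp only [map_mul, comulFree_fg, comulFree_eg, Finset.sum_mul, Finset.mul_sum,
              smul_mul_assoc, Algebra.TensorProduct.tmul_mul_tmul]
        _ = ∑ m, ∑ a, ∑ b, ∑ j,
              q a b • ((FF j a * EE j m) ⊗ₜ[k] (FF b c * EE m i)) := sum_rot4 n _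
        _ = ∑ m, ∑ a, ∑ b, (q a b * p m a) • ((1:𝔸) ⊗ₜ[k] (FF b c * EE m i)) := by
            refine Finset.sum_congr rfl fun m _ => Finset.sum_congr rfl fun a _ =>
              Finset.sum_congr rfl fun b _ => ?_
            rw [← Finset.smul_sum, ← TensorProduct.sum_tmul, relL, Algebra.algebraMap_eq_smul_one,
              ← TensorProduct.smul_tmul', smul_smul]
        _ = ∑ m, ∑ b, ∑ a, (q a b * p m a) • ((1:𝔸) ⊗ₜ[k] (FF b c * EE m i)) :=
            Finset.sum_congr rfl fun m _ => Finset.sum_comm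
        _ = ∑ m, ∑ b, (if m = b then (1:k) else 0) • ((1:𝔸) ⊗ₜ[k] (FF b c * EE m i)) := by
            refine Finset.sum_congr rfl fun m _ => Finset.sum_congr rfl fun b _ => ?_
            rw [← Finset.sum_smul]
            congr 1
            rw [← sum_pq k n q p hpq m b]
            exact Finset.sum_congr rfl fun a _ => mul_comm _ _
        _ = ∑ m, (1:𝔸) ⊗ₜ[k] (FF m c * EE m i) := by simp
        _ = (1:𝔸) ⊗ₜ[k] algebraMap k 𝔸 (p i c) := by rw [← TensorProduct.tmul_sum, relL]
        _ = algebraMap k (𝔸 ⊗[k] 𝔸) (p i c) := by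
            simp [Algebra.algebraMap_eq_smul_one, Algebra.TensorProduct.one_def]
  | right_pair i c =>
      rw [map_sum, AlgHom.commutes]
      calc ∑ j, (FreeAlgebra.lift k (comulGen k n q p)) (fg k n i j * eg k n c j)
          = ∑ j, ∑ m, ∑ a, ∑ b,
              q a b • ((FF i a * EE c m) ⊗ₜ[k] (FF b j * EE m j)) := by
            simp only [map_mul, comulFree_fg, comulFree_eg, Finset.sum_mul, Finset.mul_sum,
              smul_mul_assoc, Algebra.TensorProduct.tmul_mul_tmul]
        _ = ∑ m, ∑ a, ∑ b, ∑ j,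
              q a b • ((FF i a * EE c m) ⊗ₜ[k] (FF b j * EE m j)) := sum_rot4 n _
        _ = ∑ m, ∑ a, ∑ b, (q a b * p b m) • ((FF i a * EE c m) ⊗ₜ[k] (1:𝔸)) := by
            refine Finset.sum_congr rfl fun m _ => Finset.sum_congr rfl fun a _ =>
              Finset.sum_congr rfl fun b _ => ?_
            rw [← Finset.smul_sum, ← TensorProduct.tmul_sum, relR, Algebra.algebraMap_eq_smul_one,
              TensorProduct.tmul_smul, smul_smul]
        _ = ∑ m, ∑ a, (if a = m then (1:k) else 0) • ((FF i a * EE c m) ⊗ₜ[k] (1:𝔸)) := by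
            refine Finset.sum_congr rfl fun m _ => Finset.sum_congr rfl fun a _ => ?_
            rw [← Finset.sum_smul, sum_qp k n q p hqp a m]
        _ = ∑ m, (FF i m * EE c m) ⊗ₜ[k] (1:𝔸) := by simp
        _ = algebraMap k 𝔸 (p i c) ⊗ₜ[k] (1:𝔸) := by rw [← TensorProduct.sum_tmul, relR]
        _ = algebraMap k (𝔸 ⊗[k] 𝔸) (p i c) := by
            simp [Algebra.algebraMap_eq_smul_one, Algebra.TensorProduct.one_def,
              TensorProduct.smul_tmul']
  | left_copair i c =>
      rw [map_sum]
      have hrhs : (FreeAlgebra.lift k (comulGen k n q p))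
          ((if i = c then 1 else 0) : FreeAlgebra k (PivGen n))
          = if i = c then (1 : 𝔸 ⊗[k] 𝔸) else 0 := by
        split
        · exact map_one _
        · exact map_zero _
      rw [hrhs]
      calc ∑ j, (FreeAlgebra.lift k (comulGen k n q p)) (∑ l, q j l • (eg k n j i * fg k n l c))
          = ∑ j, ∑ l, ∑ a, ∑ b, ∑ m, (q j l * q a b) •
              ((EE j m * FF l a) ⊗ₜ[k] (EE m i * FF b c)) := by
            simp only [map_sum, map_smul, map_mul, comulFree_fg, comulFree_eg, Finset.sum_mul,
              Finset.mul_sum, Finset.smul_sum, smul_mul_assoc, mul_smul_comm,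
              Algebra.TensorProduct.tmul_mul_tmul, smul_smul]
        _ = ∑ l, ∑ a, ∑ b, ∑ m, ∑ j, (q j l * q a b) •
              ((EE j m * FF l a) ⊗ₜ[k] (EE m i * FF b c)) := sum_rot5 n _
        _ = ∑ a, ∑ b, ∑ m, ∑ j, ∑ l, (q j l * q a b) •
              ((EE j m * FF l a) ⊗ₜ[k] (EE m i * FF b c)) := sum_rot5 n _
        _ = ∑ a, ∑ b, ∑ m, q a b •
              ((if m = a then (1:𝔸) else 0) ⊗ₜ[k] (EE m i * FF b c)) := by
            refine Finset.sum_congr rfl fun a _ => Finset.sum_congr rfl fun b _ =>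
              Finset.sum_congr rfl fun m _ => ?_
            rw [← relCL k n q p m a]
            simp only [TensorProduct.sum_tmul, Finset.smul_sum]
            refine Finset.sum_congr rfl fun j _ => Finset.sum_congr rfl fun l _ => ?_
            rw [← TensorProduct.smul_tmul', smul_smul, mul_comm (q a b)]
        _ = ∑ a, ∑ b, q a b • ((1:𝔸) ⊗ₜ[k] (EE a i * FF b c)) := by
            refine Finset.sum_congr rfl fun a _ => Finset.sum_congr rfl fun b _ => ?_
            rw [Finset.sum_eq_single a]
            · rw [if_pos rfl]
            · intro m _ hm
              rw [if_neg hm, TensorProduct.zero_tmul, smul_zero]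
            · intro h
              exact absurd (Finset.mem_univ a) h
        _ = (1:𝔸) ⊗ₜ[k] (∑ a, ∑ b, q a b • (EE a i * FF b c)) := by
            simp only [← TensorProduct.tmul_smul, ← TensorProduct.tmul_sum]
        _ = (1:𝔸) ⊗ₜ[k] (if i = c then (1:𝔸) else 0) := by rw [relCL]
        _ = if i = c then (1 : 𝔸 ⊗[k] 𝔸) else 0 := by
            split
            · exact Algebra.TensorProduct.one_def.symm
            · exact TensorProduct.tmul_zero _ _
  | right_copair i c =>
      rw [map_sum]
      have hrhs : (FreeAlgebra.lift k (comulGen k n q p))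
          ((if i = c then 1 else 0) : FreeAlgebra k (PivGen n))
          = if i = c then (1 : 𝔸 ⊗[k] 𝔸) else 0 := by
        split
        · exact map_one _
        · exact map_zero _
      rw [hrhs]
      calc ∑ j, (FreeAlgebra.lift k (comulGen k n q p)) (∑ l, q l j • (eg k n i j * fg k n c l))
          = ∑ j, ∑ l, ∑ a, ∑ b, ∑ m, (q l j * q a b) •
              ((EE i m * FF c a) ⊗ₜ[k] (EE m j * FF b l)) := by
            simp only [map_sum, map_smul, map_mul, comulFree_fg, comulFree_eg, Finset.sum_mul,
              Finset.mul_sum, Finset.smul_sum, smul_mul_assoc, mul_smul_comm,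
              Algebra.TensorProduct.tmul_mul_tmul, smul_smul]
        _ = ∑ l, ∑ a, ∑ b, ∑ m, ∑ j, (q l j * q a b) •
              ((EE i m * FF c a) ⊗ₜ[k] (EE m j * FF b l)) := sum_rot5 n _
        _ = ∑ a, ∑ b, ∑ m, ∑ j, ∑ l, (q l j * q a b) •
              ((EE i m * FF c a) ⊗ₜ[k] (EE m j * FF b l)) := sum_rot5 n _
        _ = ∑ a, ∑ b, ∑ m, q a b •
              ((EE i m * FF c a) ⊗ₜ[k] (if m = b then (1:𝔸) else 0)) := by
            refine Finset.sum_congr rfl fun a _ => Finset.sum_congr rfl fun b _ =>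
              Finset.sum_congr rfl fun m _ => ?_
            rw [← relCR k n q p m b]
            simp only [TensorProduct.tmul_sum, Finset.smul_sum]
            refine Finset.sum_congr rfl fun j _ => Finset.sum_congr rfl fun l _ => ?_
            rw [TensorProduct.tmul_smul, smul_smul, mul_comm (q a b)]
        _ = ∑ a, ∑ b, q a b • ((EE i b * FF c a) ⊗ₜ[k] (1:𝔸)) := by
            refine Finset.sum_congr rfl fun a _ => Finset.sum_congr rfl fun b _ => ?_
            rw [Finset.sum_eq_single b]
            · rw [if_pos rfl]
            · intro m _ hm
              rw [if_neg hm, TensorProduct.tmul_zero, smul_zero]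
            · intro h
              exact absurd (Finset.mem_univ b) h
        _ = (∑ a, ∑ b, q a b • (EE i b * FF c a)) ⊗ₜ[k] (1:𝔸) := by
            simp only [TensorProduct.smul_tmul', TensorProduct.sum_tmul]
        _ = (∑ j, ∑ l, q l j • (EE i j * FF c l)) ⊗ₜ[k] (1:𝔸) := by
            rw [Finset.sum_comm]
        _ = (if i = c then (1:𝔸) else 0) ⊗ₜ[k] (1:𝔸) := by rw [relCR]
        _ = if i = c then (1 : 𝔸 ⊗[k] 𝔸) else 0 := by
            split
            · exact Algebra.TensorProduct.one_def.symm
            · exact TensorProduct.zero_tmul _ _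

def comulA (hqp : q * p = 1) (hpq : p * q = 1) : 𝔸 →ₐ[k] 𝔸 ⊗[k] 𝔸 :=
  RingQuot.liftAlgHom k ⟨FreeAlgebra.lift k (comulGen k n q p), comul_rel k n q p hqp hpq⟩

lemma comulA_F (hqp : q * p = 1) (hpq : p * q = 1) (i c : Fin n) :
    comulA k n q p hqp hpq (FF i c) = ∑ j, ∑ l, q j l • (FF i j ⊗ₜ[k] FF l c) := by
  rw [comulA, F']
  exact (RingQuot.liftAlgHom_mkAlgHom_apply k (FreeAlgebra.lift k (comulGen k n q p))
    (comul_rel k n q p hqp hpq) _).trans (comulFree_fg k n q p i c)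

lemma comulA_E (hqp : q * p = 1) (hpq : p * q = 1) (i c : Fin n) :
    comulA k n q p hqp hpq (EE i c) = ∑ j, EE i j ⊗ₜ[k] EE j c := by
  rw [comulA, E']
  exact (RingQuot.liftAlgHom_mkAlgHom_apply k (FreeAlgebra.lift k (comulGen k n q p))
    (comul_rel k n q p hqp hpq) _).trans (comulFree_eg k n q p i c)
def counitGen : PivGen n → k
  | .inl (i, c) => p i c
  | .inr (i, c) => if i = c then 1 else 0

lemma counitFree_fg (i c : Fin n) :
    FreeAlgebra.lift k (counitGen k n p) (fg k n i c) = p i c := by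
  simp [fg, counitGen]

lemma counitFree_eg (i c : Fin n) :
    FreeAlgebra.lift k (counitGen k n p) (eg k n i c) = if i = c then (1:k) else 0 := by
  simp [eg, counitGen]

lemma counit_rel (hqp : q * p = 1) (hpq : p * q = 1) :
    ∀ ⦃x y⦄, MatrixRel k n q p x y →
      FreeAlgebra.lift k (counitGen k n p) x = FreeAlgebra.lift k (counitGen k n p) y := by
  intro x y h
  induction h with
  | left_pair i c =>
      simp [map_sum, map_mul, counitFree_fg, counitFree_eg, mul_ite, Finset.sum_ite_eq,
        Finset.sum_ite_eq']
  | right_pair i c =>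
      simp [map_sum, map_mul, counitFree_fg, counitFree_eg, mul_ite, Finset.sum_ite_eq,
        Finset.sum_ite_eq']
  | left_copair i c =>
      have hrhs : (FreeAlgebra.lift k (counitGen k n p))
          ((if i = c then 1 else 0) : FreeAlgebra k (PivGen n))
          = if i = c then (1:k) else 0 := by
        split
        · exact map_one _
        · exact map_zero _
      simp only [map_sum, map_smul, map_mul, counitFree_fg, counitFree_eg, smul_eq_mul]
      rw [hrhs, ← sum_qp k n q p hqp i c, Finset.sum_comm]
      refine Finset.sum_congr rfl fun l _ => ?_
      simp [mul_ite, ite_mul, Finset.sum_ite_eq']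
  | right_copair i c =>
      have hrhs : (FreeAlgebra.lift k (counitGen k n p))
          ((if i = c then 1 else 0) : FreeAlgebra k (PivGen n))
          = if i = c then (1:k) else 0 := by
        split
        · exact map_one _
        · exact map_zero _
      have hic : (if i = c then (1:k) else 0) = if c = i then 1 else 0 := by
        simp [eq_comm]
      simp only [map_sum, map_smul, map_mul, counitFree_fg, counitFree_eg, smul_eq_mul]
      rw [hrhs, hic, ← sum_pq k n q p hpq c i, Finset.sum_comm]
      refine Finset.sum_congr rfl fun l _ => ?_
      simp [mul_ite, ite_mul, Finset.sum_ite_eq, mul_comm]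

def counitA (hqp : q * p = 1) (hpq : p * q = 1) : 𝔸 →ₐ[k] k :=
  RingQuot.liftAlgHom k ⟨FreeAlgebra.lift k (counitGen k n p), counit_rel k n q p hqp hpq⟩

lemma counitA_F (hqp : q * p = 1) (hpq : p * q = 1) (i c : Fin n) :
    counitA k n q p hqp hpq (FF i c) = p i c := by
  rw [counitA, F']
  exact (RingQuot.liftAlgHom_mkAlgHom_apply k (FreeAlgebra.lift k (counitGen k n p))
    (counit_rel k n q p hqp hpq) _).trans (counitFree_fg k n p i c)

lemma counitA_E (hqp : q * p = 1) (hpq : p * q = 1) (i c : Fin n) :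
    counitA k n q p hqp hpq (EE i c) = if i = c then (1:k) else 0 := by
  rw [counitA, E']
  exact (RingQuot.liftAlgHom_mkAlgHom_apply k (FreeAlgebra.lift k (counitGen k n p))
    (counit_rel k n q p hqp hpq) _).trans (counitFree_eg k n p i c)

def antGen : PivGen n → (MatrixHopf k n q p)ᵐᵒᵖ
  | .inl (i, c) => MulOpposite.op (∑ l, p i l • EE c l)
  | .inr (i, c) => MulOpposite.op (∑ l, q l i • FF c l)

lemma antFree_fg (i c : Fin n) :
    FreeAlgebra.lift k (antGen k n q p) (fg k n i c)
      = MulOpposite.op (∑ l, p i l • EE c l) := by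
  simp [fg, antGen]

lemma antFree_eg (i c : Fin n) :
    FreeAlgebra.lift k (antGen k n q p) (eg k n i c)
      = MulOpposite.op (∑ l, q l i • FF c l) := by
  simp [eg, antGen]

lemma ant_rel (hqp : q * p = 1) (hpq : p * q = 1) :
    ∀ ⦃x y⦄, MatrixRel k n q p x y →
      FreeAlgebra.lift k (antGen k n q p) x = FreeAlgebra.lift k (antGen k n q p) y := by
  intro x y h
  induction h with
  | left_pair i c =>
      apply MulOpposite.unop_injective
      simp only [map_sum, map_mul, antFree_fg, antFree_eg, Finset.unop_sum,
        MulOpposite.unop_mul, MulOpposite.unop_op, AlgHom.commutes,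
        MulOpposite.algebraMap_apply]
      calc ∑ j, (∑ r, q r j • FF i r) * (∑ m, p j m • EE c m)
          = ∑ j, ∑ m, ∑ r, (p j m * q r j) • (FF i r * EE c m) := by
            simp only [Finset.sum_mul, Finset.mul_sum, Finset.smul_sum, smul_mul_assoc,
              mul_smul_comm, smul_smul]
        _ = ∑ m, ∑ r, ∑ j, (p j m * q r j) • (FF i r * EE c m) := sum_rot3 n _
        _ = ∑ m, ∑ r, (if r = m then (1:k) else 0) • (FF i r * EE c m) := by
            refine Finset.sum_congr rfl fun m _ => Finset.sum_congr rfl fun r _ => ?_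
            rw [← Finset.sum_smul]
            congr 1
            rw [← sum_qp k n q p hqp r m]
            exact Finset.sum_congr rfl fun j _ => mul_comm _ _
        _ = ∑ m, FF i m * EE c m := by simp
        _ = algebraMap k 𝔸 (p i c) := relR k n q p i c
  | right_pair i c =>
      apply MulOpposite.unop_injective
      simp only [map_sum, map_mul, antFree_fg, antFree_eg, Finset.unop_sum,
        MulOpposite.unop_mul, MulOpposite.unop_op, AlgHom.commutes,
        MulOpposite.algebraMap_apply]
      have hscalar : ∑ m, ∑ r, p i m * q r c * p m r = p i c := by
        calc ∑ m, ∑ r, p i m * q r c * p m r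
            = ∑ m, p i m * ∑ r, p m r * q r c := by
              refine Finset.sum_congr rfl fun m _ => ?_
              rw [Finset.mul_sum]
              exact Finset.sum_congr rfl fun r _ => by ring
          _ = ∑ m, p i m * (if m = c then (1:k) else 0) := by
              refine Finset.sum_congr rfl fun m _ => ?_
              rw [sum_pq k n q p hpq m c]
          _ = p i c := by simp
      calc ∑ j, (∑ r, q r c • FF j r) * (∑ m, p i m • EE j m)
          = ∑ j, ∑ m, ∑ r, (p i m * q r c) • (FF j r * EE j m) := by
            simp only [Finset.sum_mul, Finset.mul_sum, Finset.smul_sum, smul_mul_assoc,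
              mul_smul_comm, smul_smul]
        _ = ∑ m, ∑ r, ∑ j, (p i m * q r c) • (FF j r * EE j m) := sum_rot3 n _
        _ = ∑ m, ∑ r, (p i m * q r c * p m r) • (1:𝔸) := by
            refine Finset.sum_congr rfl fun m _ => Finset.sum_congr rfl fun r _ => ?_
            rw [← Finset.smul_sum, relL, Algebra.algebraMap_eq_smul_one, smul_smul]
        _ = (∑ m, ∑ r, p i m * q r c * p m r) • (1:𝔸) := by
            simp only [Finset.sum_smul]
        _ = algebraMap k 𝔸 (p i c) := by
            rw [hscalar, Algebra.algebraMap_eq_smul_one]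
  | left_copair i c =>
      apply MulOpposite.unop_injective
      have hrhs : (FreeAlgebra.lift k (antGen k n q p))
          ((if i = c then 1 else 0) : FreeAlgebra k (PivGen n))
          = if i = c then 1 else 0 := by
        split
        · exact map_one _
        · exact map_zero _
      rw [hrhs]
      have hunop : MulOpposite.unop ((if i = c then (1:(MatrixHopf k n q p)ᵐᵒᵖ) else 0))
          = if i = c then (1:𝔸) else 0 := by
        split <;> rfl
      simp only [map_sum, map_smul, map_mul, antFree_fg, antFree_eg, Finset.unop_sum,
        MulOpposite.unop_smul, MulOpposite.unop_mul, MulOpposite.unop_op, hunop]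
      have hscalar : ∀ m r : Fin n, ∑ j, ∑ l, q j l * p l m * q r j = q r m := by
        intro m r
        calc ∑ j, ∑ l, q j l * p l m * q r j
            = ∑ j, (∑ l, q j l * p l m) * q r j := by
              refine Finset.sum_congr rfl fun j _ => ?_
              rw [Finset.sum_mul]
          _ = ∑ j, (if j = m then (1:k) else 0) * q r j := by
              refine Finset.sum_congr rfl fun j _ => ?_
              rw [sum_qp k n q p hqp j m]
          _ = q r m := by simp
      calc ∑ j, ∑ l, q j l • ((∑ m, p l m • EE c m) * (∑ r, q r j • FF i r))
          = ∑ j, ∑ l, ∑ r, ∑ m, (q j l * (q r j * p l m)) • (EE c m * FF i r) := by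
            simp only [Finset.sum_mul, Finset.mul_sum, Finset.smul_sum, smul_mul_assoc,
              mul_smul_comm, smul_smul]
        _ = ∑ j, ∑ l, ∑ r, ∑ m, (q j l * p l m * q r j) • (EE c m * FF i r) := by
            refine Finset.sum_congr rfl fun j _ => Finset.sum_congr rfl fun l _ =>
              Finset.sum_congr rfl fun r _ => Finset.sum_congr rfl fun m _ => ?_
            congr 1
            ring
        _ = ∑ l, ∑ r, ∑ m, ∑ j, (q j l * p l m * q r j) • (EE c m * FF i r) := sum_rot4 n _
        _ = ∑ r, ∑ m, ∑ j, ∑ l, (q j l * p l m * q r j) • (EE c m * FF i r) := sum_rot4 n _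
        _ = ∑ m, ∑ r, ∑ j, ∑ l, (q j l * p l m * q r j) • (EE c m * FF i r) :=
            Finset.sum_comm
        _ = ∑ m, ∑ r, (∑ j, ∑ l, q j l * p l m * q r j) • (EE c m * FF i r) := by
            simp only [Finset.sum_smul]
        _ = ∑ m, ∑ r, q r m • (EE c m * FF i r) := by
            refine Finset.sum_congr rfl fun m _ => Finset.sum_congr rfl fun r _ => ?_
            rw [hscalar]
        _ = if i = c then (1:𝔸) else 0 := by
            rw [relCR k n q p c i]
            simp [eq_comm]
  | right_copair i c =>
      apply MulOpposite.unop_injective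
      have hrhs : (FreeAlgebra.lift k (antGen k n q p))
          ((if i = c then 1 else 0) : FreeAlgebra k (PivGen n))
          = if i = c then 1 else 0 := by
        split
        · exact map_one _
        · exact map_zero _
      rw [hrhs]
      have hunop : MulOpposite.unop ((if i = c then (1:(MatrixHopf k n q p)ᵐᵒᵖ) else 0))
          = if i = c then (1:𝔸) else 0 := by
        split <;> rfl
      simp only [map_sum, map_smul, map_mul, antFree_fg, antFree_eg, Finset.unop_sum,
        MulOpposite.unop_smul, MulOpposite.unop_mul, MulOpposite.unop_op, hunop]
      calc ∑ j, ∑ l, q l j • ((∑ m, p c m • EE l m) * (∑ r, q r i • FF j r))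
          = ∑ j, ∑ l, ∑ r, ∑ m, (q l j * (q r i * p c m)) • (EE l m * FF j r) := by
            simp only [Finset.sum_mul, Finset.mul_sum, Finset.smul_sum, smul_mul_assoc,
              mul_smul_comm, smul_smul]
        _ = ∑ j, ∑ l, ∑ r, ∑ m, (p c m * q r i) • (q l j • (EE l m * FF j r)) := by
            refine Finset.sum_congr rfl fun j _ => Finset.sum_congr rfl fun l _ =>
              Finset.sum_congr rfl fun r _ => Finset.sum_congr rfl fun m _ => ?_
            rw [smul_smul]
            congr 1
            ring
        _ = ∑ l, ∑ r, ∑ m, ∑ j, (p c m * q r i) • (q l j • (EE l m * FF j r)) := sum_rot4 n _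
        _ = ∑ r, ∑ m, ∑ j, ∑ l, (p c m * q r i) • (q l j • (EE l m * FF j r)) := sum_rot4 n _
        _ = ∑ m, ∑ r, ∑ j, ∑ l, (p c m * q r i) • (q l j • (EE l m * FF j r)) :=
            Finset.sum_comm
        _ = ∑ m, ∑ r, (p c m * q r i) • ((if m = r then (1:𝔸) else 0)) := by
            refine Finset.sum_congr rfl fun m _ => Finset.sum_congr rfl fun r _ => ?_
            simp only [← Finset.smul_sum]
            congr 1
            rw [Finset.sum_comm]
            exact relCL k n q p m r
        _ = ∑ m, (p c m * q m i) • (1:𝔸) := by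
            refine Finset.sum_congr rfl fun m _ => ?_
            rw [Finset.sum_eq_single m]
            · rw [if_pos rfl]
            · intro r _ hr
              rw [if_neg fun hh => hr hh.symm, smul_zero]
            · intro h
              exact absurd (Finset.mem_univ m) h
        _ = (∑ m, p c m * q m i) • (1:𝔸) := by simp only [Finset.sum_smul]
        _ = if i = c then (1:𝔸) else 0 := by
            rw [sum_pq k n q p hpq c i]
            by_cases h : i = c
            · simp [h]
            · rw [if_neg fun hh => h hh.symm, if_neg h, zero_smul]

def antA (hqp : q * p = 1) (hpq : p * q = 1) : 𝔸 →ₐ[k] (MatrixHopf k n q p)ᵐᵒᵖ :=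
  RingQuot.liftAlgHom k ⟨FreeAlgebra.lift k (antGen k n q p), ant_rel k n q p hqp hpq⟩

lemma antA_F (hqp : q * p = 1) (hpq : p * q = 1) (i c : Fin n) :
    antA k n q p hqp hpq (FF i c) = MulOpposite.op (∑ l, p i l • EE c l) := by
  rw [antA, F']
  exact (RingQuot.liftAlgHom_mkAlgHom_apply k (FreeAlgebra.lift k (antGen k n q p))
    (ant_rel k n q p hqp hpq) _).trans (antFree_fg k n q p i c)

lemma antA_E (hqp : q * p = 1) (hpq : p * q = 1) (i c : Fin n) :
    antA k n q p hqp hpq (EE i c) = MulOpposite.op (∑ l, q l i • FF c l) := by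
  rw [antA, E']
  exact (RingQuot.liftAlgHom_mkAlgHom_apply k (FreeAlgebra.lift k (antGen k n q p))
    (ant_rel k n q p hqp hpq) _).trans (antFree_eg k n q p i c)

def SL (hqp : q * p = 1) (hpq : p * q = 1) : 𝔸 →ₗ[k] 𝔸 :=
  (MulOpposite.opLinearEquiv k).symm.toLinearMap ∘ₗ (antA k n q p hqp hpq).toLinearMap

lemma SL_apply (hqp : q * p = 1) (hpq : p * q = 1) (a : 𝔸) :
    SL k n q p hqp hpq a = MulOpposite.unop (antA k n q p hqp hpq a) := rfl

lemma SL_F (hqp : q * p = 1) (hpq : p * q = 1) (i c : Fin n) :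
    SL k n q p hqp hpq (FF i c) = ∑ l, p i l • EE c l := by
  rw [SL_apply, antA_F]
  rfl

lemma SL_E (hqp : q * p = 1) (hpq : p * q = 1) (i c : Fin n) :
    SL k n q p hqp hpq (EE i c) = ∑ l, q l i • FF c l := by
  rw [SL_apply, antA_E]
  rfl

lemma SL_mul (hqp : q * p = 1) (hpq : p * q = 1) (a b : 𝔸) :
    SL k n q p hqp hpq (a * b) = SL k n q p hqp hpq b * SL k n q p hqp hpq a := by
  simp only [SL_apply, map_mul, MulOpposite.unop_mul]

lemma SL_one (hqp : q * p = 1) (hpq : p * q = 1) :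
    SL k n q p hqp hpq 1 = 1 := by
  simp only [SL_apply, map_one, MulOpposite.unop_one]

lemma SL_algebraMap (hqp : q * p = 1) (hpq : p * q = 1) (r : k) :
    SL k n q p hqp hpq (algebraMap k 𝔸 r) = algebraMap k 𝔸 r := by
  rw [SL_apply, AlgHom.commutes, MulOpposite.algebraMap_apply, MulOpposite.unop_op]

section Bridges

variable {B C D : Type} [Semiring B] [Algebra k B] [Semiring C] [Algebra k C]

lemma map_id_toLinearMap (f : B →ₐ[k] C) :
    (Algebra.TensorProduct.map f (AlgHom.id k 𝔸)).toLinearMap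
      = f.toLinearMap.rTensor 𝔸 :=
  TensorProduct.ext' fun a b => by simp

lemma id_map_toLinearMap (f : B →ₐ[k] C) :
    (Algebra.TensorProduct.map (AlgHom.id k 𝔸) f).toLinearMap
      = f.toLinearMap.lTensor 𝔸 :=
  TensorProduct.ext' fun a b => by simp

end Bridges

lemma assoc_toLinearMap :
    (Algebra.TensorProduct.assoc k k k 𝔸 𝔸 𝔸).toLinearMap
      = (TensorProduct.assoc k 𝔸 𝔸 𝔸).toLinearMap := by
  apply TensorProduct.ext_threefold
  intro a b c
  simp [Algebra.TensorProduct.assoc_tmul]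

set_option maxHeartbeats 1000000 in
lemma coassoc_algHom (hqp : q * p = 1) (hpq : p * q = 1) :
    ((Algebra.TensorProduct.assoc k k k 𝔸 𝔸 𝔸).toAlgHom.comp
      ((Algebra.TensorProduct.map (comulA k n q p hqp hpq) (AlgHom.id k 𝔸)).comp
        (comulA k n q p hqp hpq)))
    = (Algebra.TensorProduct.map (AlgHom.id k 𝔸) (comulA k n q p hqp hpq)).comp
        (comulA k n q p hqp hpq) := by
  apply algHom_ext
  · intro i c
    simp only [AlgHom.coe_comp, Function.comp_apply, AlgEquiv.toAlgHom_eq_coe,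
      AlgHom.coe_coe, comulA_F, map_sum, map_smul, Algebra.TensorProduct.map_tmul,
      AlgHom.coe_id, id_eq, Algebra.TensorProduct.assoc_tmul, comulA_F,
      TensorProduct.sum_tmul, TensorProduct.tmul_sum, TensorProduct.smul_tmul',
      TensorProduct.tmul_smul, Finset.smul_sum, smul_smul]
    simp only [← TensorProduct.smul_tmul', TensorProduct.tmul_smul, smul_smul]
    exact (sum_rot4 n _).trans (sum_rot4 n _)
  · intro i c
    simp only [AlgHom.coe_comp, Function.comp_apply, AlgEquiv.toAlgHom_eq_coe,
      AlgHom.coe_coe, comulA_E, map_sum, Algebra.TensorProduct.map_tmul,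
      AlgHom.coe_id, id_eq, Algebra.TensorProduct.assoc_tmul,
      TensorProduct.sum_tmul, TensorProduct.tmul_sum]
    exact Finset.sum_comm


lemma scalar_tmul (r : k) (y : 𝔸) : (r ⊗ₜ[k] y : k ⊗[k] 𝔸) = r • ((1:k) ⊗ₜ[k] y) := by
  rw [TensorProduct.smul_tmul', smul_eq_mul, mul_one]

lemma tmul_scalar (r : k) (y : 𝔸) : (y ⊗ₜ[k] r : 𝔸 ⊗[k] k) = r • (y ⊗ₜ[k] (1:k)) := by
  rw [← TensorProduct.tmul_smul, smul_eq_mul, mul_one]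

lemma rcounit_algHom (hqp : q * p = 1) (hpq : p * q = 1) :
    (Algebra.TensorProduct.map (counitA k n q p hqp hpq) (AlgHom.id k 𝔸)).comp
        (comulA k n q p hqp hpq)
      = Algebra.TensorProduct.includeRight := by
  apply algHom_ext
  · intro i c
    simp only [AlgHom.coe_comp, Function.comp_apply, comulA_F, map_sum, map_smul,
      Algebra.TensorProduct.map_tmul, AlgHom.coe_id, id_eq, counitA_F,
      Algebra.TensorProduct.includeRight_apply]
    calc ∑ j, ∑ l, q j l • ((p i j) ⊗ₜ[k] FF l c)
        = ∑ j, ∑ l, (q j l * p i j) • ((1:k) ⊗ₜ[k] FF l c) := by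
          refine Finset.sum_congr rfl fun j _ => Finset.sum_congr rfl fun l _ => ?_
          rw [scalar_tmul, smul_smul]
      _
        = ∑ l, ∑ j, (q j l * p i j) • ((1:k) ⊗ₜ[k] FF l c) := Finset.sum_comm
      _ = ∑ l, (if i = l then (1:k) else 0) • ((1:k) ⊗ₜ[k] FF l c) := by
          refine Finset.sum_congr rfl fun l _ => ?_
          rw [← Finset.sum_smul]
          congr 1
          rw [← sum_pq k n q p hpq i l]
          exact Finset.sum_congr rfl fun j _ => mul_comm _ _
      _ = (1:k) ⊗ₜ[k] FF i c := by simp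
  · intro i c
    simp only [AlgHom.coe_comp, Function.comp_apply, comulA_E, map_sum,
      Algebra.TensorProduct.map_tmul, AlgHom.coe_id, id_eq, counitA_E,
      Algebra.TensorProduct.includeRight_apply, TensorProduct.ite_tmul]
    simp

lemma lcounit_algHom (hqp : q * p = 1) (hpq : p * q = 1) :
    (Algebra.TensorProduct.map (AlgHom.id k 𝔸) (counitA k n q p hqp hpq)).comp
        (comulA k n q p hqp hpq)
      = Algebra.TensorProduct.includeLeft := by
  apply algHom_ext
  · intro i c
    simp only [AlgHom.coe_comp, Function.comp_apply, comulA_F, map_sum, map_smul,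
      Algebra.TensorProduct.map_tmul, AlgHom.coe_id, id_eq, counitA_F,
      Algebra.TensorProduct.includeLeft_apply]
    calc ∑ j, ∑ l, q j l • (FF i j ⊗ₜ[k] (p l c))
        = ∑ j, ∑ l, (q j l * p l c) • (FF i j ⊗ₜ[k] (1:k)) := by
          refine Finset.sum_congr rfl fun j _ => Finset.sum_congr rfl fun l _ => ?_
          rw [tmul_scalar, smul_smul]
      _
        = ∑ j, (if j = c then (1:k) else 0) • (FF i j ⊗ₜ[k] (1:k)) := by
          refine Finset.sum_congr rfl fun j _ => ?_
          rw [← Finset.sum_smul, sum_qp k n q p hqp j c]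
      _ = FF i c ⊗ₜ[k] (1:k) := by simp
  · intro i c
    simp only [AlgHom.coe_comp, Function.comp_apply, comulA_E, map_sum,
      Algebra.TensorProduct.map_tmul, AlgHom.coe_id, id_eq, counitA_E,
      Algebra.TensorProduct.includeLeft_apply, TensorProduct.tmul_ite]
    simp

def coalg (hqp : q * p = 1) (hpq : p * q = 1) : Coalgebra k 𝔸 where
  comul := (comulA k n q p hqp hpq).toLinearMap
  counit := (counitA k n q p hqp hpq).toLinearMap
  coassoc := by
    apply LinearMap.ext
    intro a
    have h := AlgHom.congr_fun (coassoc_algHom k n q p hqp hpq) a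
    simp only [AlgHom.coe_comp, Function.comp_apply, AlgEquiv.toAlgHom_eq_coe,
      AlgHom.coe_coe] at h
    have e1 := DFunLike.congr_fun (map_id_toLinearMap k n q p (comulA k n q p hqp hpq))
      ((comulA k n q p hqp hpq) a)
    have e2 := DFunLike.congr_fun (id_map_toLinearMap k n q p (comulA k n q p hqp hpq))
      ((comulA k n q p hqp hpq) a)
    have e3 := DFunLike.congr_fun (assoc_toLinearMap k n q p)
      ((Algebra.TensorProduct.map (comulA k n q p hqp hpq) (AlgHom.id k 𝔸))
        ((comulA k n q p hqp hpq) a))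
    simp only [AlgHom.toLinearMap_apply, AlgEquiv.toLinearMap_apply,
      LinearEquiv.coe_coe] at e1 e2 e3
    simp only [LinearMap.coe_comp, Function.comp_apply, AlgHom.toLinearMap_apply,
      LinearEquiv.coe_coe]
    rw [← e1, ← e2]
    exact h
  rTensor_counit_comp_comul := by
    apply LinearMap.ext
    intro a
    have h := AlgHom.congr_fun (rcounit_algHom k n q p hqp hpq) a
    simp only [AlgHom.coe_comp, Function.comp_apply,
      Algebra.TensorProduct.includeRight_apply] at h
    have e1 := DFunLike.congr_fun (map_id_toLinearMap k n q p (counitA k n q p hqp hpq))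
      ((comulA k n q p hqp hpq) a)
    simp only [AlgHom.toLinearMap_apply] at e1
    simp only [LinearMap.coe_comp, Function.comp_apply, AlgHom.toLinearMap_apply]
    rw [← e1, h]
    rfl
  lTensor_counit_comp_comul := by
    apply LinearMap.ext
    intro a
    have h := AlgHom.congr_fun (lcounit_algHom k n q p hqp hpq) a
    simp only [AlgHom.coe_comp, Function.comp_apply,
      Algebra.TensorProduct.includeLeft_apply] at h
    have e1 := DFunLike.congr_fun (id_map_toLinearMap k n q p (counitA k n q p hqp hpq))
      ((comulA k n q p hqp hpq) a)
    simp only [AlgHom.toLinearMap_apply] at e1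
    simp only [LinearMap.coe_comp, Function.comp_apply, AlgHom.toLinearMap_apply]
    rw [← e1, h]
    rfl

def bialg (hqp : q * p = 1) (hpq : p * q = 1) : Bialgebra k 𝔸 :=
  letI : Coalgebra k 𝔸 := coalg k n q p hqp hpq
  Bialgebra.mk' k 𝔸 (map_one (counitA k n q p hqp hpq))
    (fun {a b} => map_mul (counitA k n q p hqp hpq) a b)
    (map_one (comulA k n q p hqp hpq))
    (fun {a b} => map_mul (comulA k n q p hqp hpq) a b)

lemma mulS_rT (hqp : q * p = 1) (hpq : p * q = 1) (t : 𝔸 ⊗[k] 𝔸) (c d : 𝔸) :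
    LinearMap.mul' k 𝔸 ((SL k n q p hqp hpq).rTensor 𝔸 (t * (c ⊗ₜ[k] d)))
      = SL k n q p hqp hpq c * LinearMap.mul' k 𝔸 ((SL k n q p hqp hpq).rTensor 𝔸 t) * d := by
  induction t using TensorProduct.induction_on with
  | zero => simp
  | tmul a b =>
      simp only [Algebra.TensorProduct.tmul_mul_tmul, LinearMap.rTensor_tmul,
        LinearMap.mul'_apply, SL_mul]
      simp [mul_assoc]
  | add u v hu hv =>
      simp only [add_mul, map_add, hu, hv, mul_add, add_mul]

lemma mulS_lT (hqp : q * p = 1) (hpq : p * q = 1) (t : 𝔸 ⊗[k] 𝔸) (c d : 𝔸) :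
    LinearMap.mul' k 𝔸 ((SL k n q p hqp hpq).lTensor 𝔸 ((c ⊗ₜ[k] d) * t))
      = c * LinearMap.mul' k 𝔸 ((SL k n q p hqp hpq).lTensor 𝔸 t) * SL k n q p hqp hpq d := by
  induction t using TensorProduct.induction_on with
  | zero => simp
  | tmul a b =>
      simp only [Algebra.TensorProduct.tmul_mul_tmul, LinearMap.lTensor_tmul,
        LinearMap.mul'_apply, SL_mul]
      simp [mul_assoc]
  | add u v hu hv =>
      simp only [mul_add, map_add, hu, hv, add_mul, mul_add]

lemma antipode_rT (hqp : q * p = 1) (hpq : p * q = 1) (a : 𝔸) :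
    LinearMap.mul' k 𝔸 ((SL k n q p hqp hpq).rTensor 𝔸 (comulA k n q p hqp hpq a))
      = counitA k n q p hqp hpq a • 1 := by
  obtain ⟨x, rfl⟩ := RingQuot.mkAlgHom_surjective k (MatrixRel k n q p) a
  induction x using FreeAlgebra.induction with
  | grade0 r =>
      have halg : ((algebraMap k (RingQuot (MatrixRel k n q p))) r : 𝔸) = algebraMap k 𝔸 r :=
        rfl
      rw [AlgHom.commutes (RingQuot.mkAlgHom k (MatrixRel k n q p)) r, halg,
        AlgHom.commutes, AlgHom.commutes, Algebra.algebraMap_self_apply,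
        Algebra.algebraMap_eq_smul_one, Algebra.TensorProduct.one_def, map_smul, map_smul,
        LinearMap.rTensor_tmul, LinearMap.mul'_apply, SL_one, one_mul]
  | grade1 g =>
      obtain (⟨i, c⟩ | ⟨i, c⟩) := g
      · have hg : RingQuot.mkAlgHom k (MatrixRel k n q p) (FreeAlgebra.ι k (Sum.inl (i, c)))
            = FF i c := rfl
        rw [hg, comulA_F, counitA_F]
        calc LinearMap.mul' k 𝔸 ((SL k n q p hqp hpq).rTensor 𝔸
              (∑ j, ∑ l, q j l • (FF i j ⊗ₜ[k] FF l c)))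
            = ∑ j, ∑ l, q j l • (SL k n q p hqp hpq (FF i j) * FF l c) := by
              simp only [map_sum, map_smul, LinearMap.rTensor_tmul, LinearMap.mul'_apply]
          _ = ∑ j, ∑ l, ∑ m, (q j l * p i m) • (EE j m * FF l c) := by
              refine Finset.sum_congr rfl fun j _ => Finset.sum_congr rfl fun l _ => ?_
              rw [SL_F]
              simp only [Finset.sum_mul, smul_mul_assoc, Finset.smul_sum, smul_smul]
          _ = ∑ l, ∑ m, ∑ j, (q j l * p i m) • (EE j m * FF l c) := sum_rot3 n _
          _ = ∑ m, ∑ j, ∑ l, (q j l * p i m) • (EE j m * FF l c) := sum_rot3 n _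
          _ = ∑ m, p i m • ∑ j, ∑ l, q j l • (EE j m * FF l c) := by
              refine Finset.sum_congr rfl fun m _ => ?_
              simp only [Finset.smul_sum, smul_smul]
              exact Finset.sum_congr rfl fun j _ => Finset.sum_congr rfl fun l _ => by
                rw [mul_comm (q j l)]
          _ = ∑ m, p i m • (if m = c then (1:𝔸) else 0) := by
              refine Finset.sum_congr rfl fun m _ => ?_
              rw [relCL]
          _ = p i c • 1 := by
              rw [Finset.sum_eq_single c]
              · rw [if_pos rfl]
              · intro m _ hm
                rw [if_neg hm, smul_zero]
              · intro h
                exact absurd (Finset.mem_univ c) h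
      · have hg : RingQuot.mkAlgHom k (MatrixRel k n q p) (FreeAlgebra.ι k (Sum.inr (i, c)))
            = EE i c := rfl
        rw [hg, comulA_E, counitA_E]
        calc LinearMap.mul' k 𝔸 ((SL k n q p hqp hpq).rTensor 𝔸
              (∑ j, EE i j ⊗ₜ[k] EE j c))
            = ∑ j, SL k n q p hqp hpq (EE i j) * EE j c := by
              simp only [map_sum, LinearMap.rTensor_tmul, LinearMap.mul'_apply]
          _ = ∑ j, ∑ l, (q l i) • (FF j l * EE j c) := by
              refine Finset.sum_congr rfl fun j _ => ?_
              rw [SL_E]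
              simp only [Finset.sum_mul, smul_mul_assoc]
          _ = ∑ l, ∑ j, (q l i) • (FF j l * EE j c) := Finset.sum_comm
          _ = ∑ l, (q l i * p c l) • (1:𝔸) := by
              refine Finset.sum_congr rfl fun l _ => ?_
              rw [← Finset.smul_sum, relL, Algebra.algebraMap_eq_smul_one, smul_smul]
          _ = (∑ l, p c l * q l i) • (1:𝔸) := by
              rw [← Finset.sum_smul]
              congr 1
              exact Finset.sum_congr rfl fun l _ => mul_comm _ _
          _ = (if i = c then (1:k) else 0) • (1:𝔸) := by
              rw [sum_pq k n q p hpq c i]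
              by_cases h : i = c
              · rw [if_pos h, if_pos h.symm]
              · rw [if_neg h, if_neg fun hh => h hh.symm]
  | mul x y hx hy =>
      obtain ⟨X, hX⟩ : ∃ X : 𝔸, RingQuot.mkAlgHom k (MatrixRel k n q p) x = X := ⟨_, rfl⟩
      obtain ⟨Y, hY⟩ : ∃ Y : 𝔸, RingQuot.mkAlgHom k (MatrixRel k n q p) y = Y := ⟨_, rfl⟩
      have hm : @Eq 𝔸 (RingQuot.mkAlgHom k (MatrixRel k n q p) (x * y)) (X * Y) := by
        subst hX hY
        exact map_mul _ x y
      rw [hm, map_mul (comulA k n q p hqp hpq), map_mul (counitA k n q p hqp hpq)]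
      subst hX hY
      have key : ∀ u : 𝔸 ⊗[k] 𝔸,
          LinearMap.mul' k 𝔸 ((SL k n q p hqp hpq).rTensor 𝔸
            (comulA k n q p hqp hpq (RingQuot.mkAlgHom k (MatrixRel k n q p) x) * u))
          = counitA k n q p hqp hpq (RingQuot.mkAlgHom k (MatrixRel k n q p) x) •
              LinearMap.mul' k 𝔸 ((SL k n q p hqp hpq).rTensor 𝔸 u) := by
        intro u
        induction u using TensorProduct.induction_on with
        | zero => simp
        | tmul c d =>
            rw [mulS_rT, hx, LinearMap.rTensor_tmul, LinearMap.mul'_apply]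
            rw [mul_smul_comm, mul_one, smul_mul_assoc]
        | add u v hu hv =>
            simp only [mul_add, map_add, hu, hv, smul_add]
      rw [key, hy, smul_smul]
  | add x y hx hy =>
      obtain ⟨X, hX⟩ : ∃ X : 𝔸, RingQuot.mkAlgHom k (MatrixRel k n q p) x = X := ⟨_, rfl⟩
      obtain ⟨Y, hY⟩ : ∃ Y : 𝔸, RingQuot.mkAlgHom k (MatrixRel k n q p) y = Y := ⟨_, rfl⟩
      have hm : @Eq 𝔸 (RingQuot.mkAlgHom k (MatrixRel k n q p) (x + y)) (X + Y) := by
        subst hX hY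
        exact map_add _ x y
      rw [hm]
      simp only [map_add]
      subst hX hY
      rw [hx, hy, add_smul]

lemma antipode_lT (hqp : q * p = 1) (hpq : p * q = 1) (a : 𝔸) :
    LinearMap.mul' k 𝔸 ((SL k n q p hqp hpq).lTensor 𝔸 (comulA k n q p hqp hpq a))
      = counitA k n q p hqp hpq a • 1 := by
  obtain ⟨x, rfl⟩ := RingQuot.mkAlgHom_surjective k (MatrixRel k n q p) a
  induction x using FreeAlgebra.induction with
  | grade0 r =>
      have halg : ((algebraMap k (RingQuot (MatrixRel k n q p))) r : 𝔸) = algebraMap k 𝔸 r :=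
        rfl
      rw [AlgHom.commutes (RingQuot.mkAlgHom k (MatrixRel k n q p)) r, halg,
        AlgHom.commutes, AlgHom.commutes, Algebra.algebraMap_self_apply,
        Algebra.algebraMap_eq_smul_one, Algebra.TensorProduct.one_def, map_smul, map_smul,
        LinearMap.lTensor_tmul, LinearMap.mul'_apply, SL_one, one_mul]
  | grade1 g =>
      obtain (⟨i, c⟩ | ⟨i, c⟩) := g
      · have hg : RingQuot.mkAlgHom k (MatrixRel k n q p) (FreeAlgebra.ι k (Sum.inl (i, c)))
            = FF i c := rfl
        rw [hg, comulA_F, counitA_F]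
        calc LinearMap.mul' k 𝔸 ((SL k n q p hqp hpq).lTensor 𝔸
              (∑ j, ∑ l, q j l • (FF i j ⊗ₜ[k] FF l c)))
            = ∑ j, ∑ l, q j l • (FF i j * SL k n q p hqp hpq (FF l c)) := by
              simp only [map_sum, map_smul, LinearMap.lTensor_tmul, LinearMap.mul'_apply]
          _ = ∑ j, ∑ l, ∑ m, (q j l * p l m) • (FF i j * EE c m) := by
              refine Finset.sum_congr rfl fun j _ => Finset.sum_congr rfl fun l _ => ?_
              rw [SL_F]
              simp only [Finset.mul_sum, mul_smul_comm, Finset.smul_sum, smul_smul]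
          _ = ∑ j, ∑ m, ∑ l, (q j l * p l m) • (FF i j * EE c m) :=
              Finset.sum_congr rfl fun j _ => Finset.sum_comm
          _ = ∑ j, ∑ m, (if j = m then (1:k) else 0) • (FF i j * EE c m) := by
              refine Finset.sum_congr rfl fun j _ => Finset.sum_congr rfl fun m _ => ?_
              rw [← Finset.sum_smul, sum_qp k n q p hqp j m]
          _ = ∑ j, FF i j * EE c j := by simp
          _ = p i c • 1 := by
              rw [relR, Algebra.algebraMap_eq_smul_one]
      · have hg : RingQuot.mkAlgHom k (MatrixRel k n q p) (FreeAlgebra.ι k (Sum.inr (i, c)))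
            = EE i c := rfl
        rw [hg, comulA_E, counitA_E]
        calc LinearMap.mul' k 𝔸 ((SL k n q p hqp hpq).lTensor 𝔸
              (∑ j, EE i j ⊗ₜ[k] EE j c))
            = ∑ j, EE i j * SL k n q p hqp hpq (EE j c) := by
              simp only [map_sum, LinearMap.lTensor_tmul, LinearMap.mul'_apply]
          _ = ∑ j, ∑ l, q l j • (EE i j * FF c l) := by
              refine Finset.sum_congr rfl fun j _ => ?_
              rw [SL_E]
              simp only [Finset.mul_sum, mul_smul_comm]
          _ = (if i = c then (1:k) else 0) • (1:𝔸) := by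
              rw [relCR]
              by_cases h : i = c
              · rw [if_pos h, if_pos h, one_smul]
              · rw [if_neg h, if_neg h, zero_smul]
  | mul x y hx hy =>
      obtain ⟨X, hX⟩ : ∃ X : 𝔸, RingQuot.mkAlgHom k (MatrixRel k n q p) x = X := ⟨_, rfl⟩
      obtain ⟨Y, hY⟩ : ∃ Y : 𝔸, RingQuot.mkAlgHom k (MatrixRel k n q p) y = Y := ⟨_, rfl⟩
      have hm : @Eq 𝔸 (RingQuot.mkAlgHom k (MatrixRel k n q p) (x * y)) (X * Y) := by
        subst hX hY
        exact map_mul _ x y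
      rw [hm, map_mul (comulA k n q p hqp hpq), map_mul (counitA k n q p hqp hpq)]
      subst hX hY
      have key : ∀ u : 𝔸 ⊗[k] 𝔸,
          LinearMap.mul' k 𝔸 ((SL k n q p hqp hpq).lTensor 𝔸
            (u * comulA k n q p hqp hpq (RingQuot.mkAlgHom k (MatrixRel k n q p) y)))
          = counitA k n q p hqp hpq (RingQuot.mkAlgHom k (MatrixRel k n q p) y) •
              LinearMap.mul' k 𝔸 ((SL k n q p hqp hpq).lTensor 𝔸 u) := by
        intro u
        induction u using TensorProduct.induction_on with
        | zero => simp
        | tmul c d =>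
            rw [mulS_lT, hy, LinearMap.lTensor_tmul, LinearMap.mul'_apply]
            rw [mul_smul_comm, mul_one, smul_mul_assoc]
        | add u v hu hv =>
            simp only [add_mul, map_add, hu, hv, smul_add]
      rw [key, hx, smul_smul, mul_comm (counitA k n q p hqp hpq
        (RingQuot.mkAlgHom k (MatrixRel k n q p) y))]
  | add x y hx hy =>
      obtain ⟨X, hX⟩ : ∃ X : 𝔸, RingQuot.mkAlgHom k (MatrixRel k n q p) x = X := ⟨_, rfl⟩
      obtain ⟨Y, hY⟩ : ∃ Y : 𝔸, RingQuot.mkAlgHom k (MatrixRel k n q p) y = Y := ⟨_, rfl⟩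
      have hm : @Eq 𝔸 (RingQuot.mkAlgHom k (MatrixRel k n q p) (x + y)) (X + Y) := by
        subst hX hY
        exact map_add _ x y
      rw [hm]
      simp only [map_add]
      subst hX hY
      rw [hx, hy, add_smul]

def hopf (hqp : q * p = 1) (hpq : p * q = 1) : HopfAlgebra k 𝔸 :=
  letI B : Bialgebra k 𝔸 := bialg k n q p hqp hpq
  { B with
    antipode := SL k n q p hqp hpq
    mul_antipode_rTensor_comul := by
      apply LinearMap.ext
      intro a
      simp only [LinearMap.coe_comp, Function.comp_apply, Algebra.linearMap_apply]
      rw [Algebra.algebraMap_eq_smul_one]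
      exact antipode_rT k n q p hqp hpq a
    mul_antipode_lTensor_comul := by
      apply LinearMap.ext
      intro a
      simp only [LinearMap.coe_comp, Function.comp_apply, Algebra.linearMap_apply]
      rw [Algebra.algebraMap_eq_smul_one]
      exact antipode_lT k n q p hqp hpq a }

end MHAux

/-- Example 5.10: for an invertible matrix `q ∈ GL(n,k)` with inverse `p`, the quotient of
the free algebra `k⟨fᵢⱼ, eᵢⱼ⟩` by the relations
`Σⱼ fⱼₖeⱼᵢ = Σⱼ fᵢⱼeₖⱼ = pᵢₖ`, `Σ_{j,l} eⱼᵢf_{lk}q_{jl} = Σ_{j,l} eᵢⱼf_{kl}q_{lj} = δᵢₖ`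
is a Hopf algebra with coproduct `Δ(eᵢₖ) = Σⱼ eᵢⱼ ⊗ eⱼₖ`,
`Δ(fᵢₖ) = Σ_{j,l} fᵢⱼ ⊗ f_{lk} q_{jl}`, counit `ε(eᵢₖ) = δᵢₖ`, `ε(fᵢₖ) = pᵢₖ`, and
antipode `S(eᵢₖ) = Σ_l f_{kl} q_{li}`, `S(fᵢₖ) = Σ_l eₖₗ p_{il}`. -/
theorem matrixHopf_isHopfAlgebra (q p : Matrix (Fin n) (Fin n) k)
    (hqp : q * p = 1) (hpq : p * q = 1) :
    ∃ (Δ : MatrixHopf k n q p →ₗ[k] (MatrixHopf k n q p ⊗[k] MatrixHopf k n q p))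
      (ct : MatrixHopf k n q p →ₗ[k] k) (S : MatrixHopf k n q p →ₗ[k] MatrixHopf k n q p)
      (inst : HopfAlgebra k (MatrixHopf k n q p)),
      -- the Hopf algebra structure extends the quotient algebra structure,
      -- with comultiplication `Δ`, counit `ct` and antipode `S`
      inst.toBialgebra.toAlgebra = (inferInstance : Algebra k (MatrixHopf k n q p)) ∧
      HEq (@CoalgebraStruct.comul k (MatrixHopf k n q p) _ _ _
        inst.toBialgebra.toCoalgebra.toCoalgebraStruct) Δ ∧
      HEq (@CoalgebraStruct.counit k (MatrixHopf k n q p) _ _ _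
        inst.toBialgebra.toCoalgebra.toCoalgebraStruct) ct ∧
      HEq inst.antipode S ∧
      -- `Δ(eᵢₖ) = Σⱼ eᵢⱼ ⊗ eⱼₖ`, `Δ(fᵢₖ) = Σ_{j,l} fᵢⱼ ⊗ f_{lk} q_{jl}`
      (∀ i c : Fin n, Δ (E' k n q p i c) = ∑ j, E' k n q p i j ⊗ₜ[k] E' k n q p j c) ∧
      (∀ i c : Fin n,
        Δ (F' k n q p i c) = ∑ j, ∑ l, q j l • (F' k n q p i j ⊗ₜ[k] F' k n q p l c)) ∧
      -- `ε(eᵢₖ) = δᵢₖ`, `ε(fᵢₖ) = pᵢₖ`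
      (∀ i c : Fin n, ct (E' k n q p i c) = (if i = c then 1 else 0)) ∧
      (∀ i c : Fin n, ct (F' k n q p i c) = p i c) ∧
      -- `S(eᵢₖ) = Σ_l f_{kl} q_{li}`, `S(fᵢₖ) = Σ_l eₖₗ pᵢₗ`
      (∀ i c : Fin n, S (E' k n q p i c) = ∑ l, q l i • F' k n q p c l) ∧
      (∀ i c : Fin n, S (F' k n q p i c) = ∑ l, p i l • E' k n q p c l) := by
  refine ⟨(MHAux.comulA k n q p hqp hpq).toLinearMap,
    (MHAux.counitA k n q p hqp hpq).toLinearMap,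
    MHAux.SL k n q p hqp hpq, MHAux.hopf k n q p hqp hpq, rfl, HEq.rfl, HEq.rfl, HEq.rfl,
    ?_, ?_, ?_, ?_, ?_, ?_⟩
  · exact fun i c => MHAux.comulA_E k n q p hqp hpq i c
  · exact fun i c => MHAux.comulA_F k n q p hqp hpq i c
  · exact fun i c => MHAux.counitA_E k n q p hqp hpq i c
  · exact fun i c => MHAux.counitA_F k n q p hqp hpq i c
  · exact fun i c => MHAux.SL_E k n q p hqp hpq i c
  · exact fun i c => MHAux.SL_F k n q p hqp hpq i c

end
end
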